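/- Let G be an interval catch digraph on vertex set V = {1,…,n}, let K ⊆ V, and let k^1 < k^2 < ⋯ < k^p be the elements of K. Define the intervals I_0 = {1,…,k^1}, I_t = {k^t,…,k^{t+1}} for t ∈ {1,…,p−1}, and I_p = {k^p,…,n}. Then K is a kernelokernel of G if and only if, for every t ∈ {0,…,p}, the set K ∩ I_t is a kernel of the subgraph of G induced by I_t. -/

import Mathlib

namespace LD

/-- `K` is a kernel of the digraph with vertex set `S` and arc relation `A`:
independent and absorbing. -/
def Kernel {V : Type*} (S : Set V) (A : V → V → Prop) (K : Set V) : Prop :=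
  K ⊆ S ∧ (∀ i ∈ K, ∀ j ∈ K, ¬ A i j) ∧ ∀ u ∈ S, u ∉ K → ∃ k ∈ K, A u k

/-- A digraph on the linearly ordered vertex set `{1,…,n}` (here `Fin n`) is an
interval catch digraph: the out-neighborhood of each vertex `i` is
`{l_i,…,r_i} \ {i}` for some `l_i ≤ i ≤ r_i`. -/
def IntervalCatchFull {n : ℕ} (A : Fin n → Fin n → Prop) : Prop :=
  ∀ i : Fin n, ∃ l r : Fin n, l ≤ i ∧ i ≤ r ∧
    ∀ j : Fin n, (A i j ↔ (l ≤ j ∧ j ≤ r ∧ j ≠ i))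

/-- Given the increasing enumeration `k : Fin p → Fin n` of a set `K`, the
interval `I_t` for `t ∈ {0,…,p}`: `I_0 = {1,…,k^1}`, `I_t = {k^t,…,k^{t+1}}`
for `0 < t < p`, and `I_p = {k^p,…,n}`. -/
def Iv {n p : ℕ} (k : Fin p → Fin n) (t : Fin (p + 1)) : Set (Fin n) :=
  {x | (∀ _ : 0 < (t : ℕ), k ⟨(t : ℕ) - 1, by have := t.isLt; omega⟩ ≤ x) ∧
       (∀ ht : (t : ℕ) < p, x ≤ k ⟨(t : ℕ), ht⟩)}

end LD

open LD in
/-- structure of kernels of interval catch digraphs.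
Let `G` be an interval catch digraph on `{1,…,n}` and let `k^1 < ⋯ < k^p` be the
elements of a set `K` (given by a strictly monotone enumeration `k`). Then `K`
is a kernel of `G` iff for every `t ∈ {0,…,p}`, the set `K ∩ I_t` is a kernel of
the subgraph of `G` induced by `I_t`. -/
theorem kernel_iff_interval_kernels {n p : ℕ} (A : Fin n → Fin n → Prop)
    (hA : IntervalCatchFull A) (k : Fin p → Fin n) (hk : StrictMono k) :
    Kernel Set.univ A (Set.range k) ↔
      ∀ t : Fin (p + 1), Kernel (Iv k t) A (Set.range k ∩ Iv k t) := by
  classical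
  constructor
  · rintro ⟨-, hind, habs⟩ t
    refine ⟨Set.inter_subset_right, fun i hi j hj => hind i hi.1 j hj.1, ?_⟩
    intro u hu hu'
    have hunk : u ∉ Set.range k := fun h => hu' ⟨h, hu⟩
    obtain ⟨m, ⟨s, rfl⟩, hAm⟩ := habs u trivial hunk
    obtain ⟨l, r, hl, hr, hspec⟩ := hA u
    rw [hspec] at hAm
    obtain ⟨hlm, hmr, hmu⟩ := hAm
    obtain ⟨hu1, hu2⟩ := hu
    have hune : ∀ s : Fin p, u ≠ k s := fun s h => hunk ⟨s, h.symm⟩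
    rcases lt_or_gt_of_ne hmu.symm with hcase | hcase
    · -- u < k s : target to the right
      have ht : (t : ℕ) < p := by
        by_contra h
        have htp : (t : ℕ) = p := by have := t.isLt; omega
        have hp0 : 0 < p := s.pos
        have h1 := hu1 (by omega)
        have hks : k s ≤ k ⟨p - 1, by omega⟩ := hk.monotone (by
          simp only [Fin.le_def]; omega)
        have : k ⟨(t:ℕ) - 1, by have := t.isLt; omega⟩ = k ⟨p - 1, by omega⟩ := by
          congr 1; simp [htp]
        rw [this] at h1
        exact absurd (hcase.trans_le hks) (not_lt.mpr h1)
      set kt := k ⟨(t : ℕ), ht⟩ with hkt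
      by_cases hms : k s ≤ kt
      · exact ⟨k s, ⟨⟨s, rfl⟩, fun h0 => (hu1 h0).trans hcase.le, fun ht' => hms⟩,
          (hspec _).mpr ⟨hlm, hmr, hmu⟩⟩
      · push_neg at hms
        have hukt : u < kt := lt_of_le_of_ne (hu2 ht) (hune _)
        refine ⟨kt, ⟨⟨_, rfl⟩, fun h0 => (hu1 h0).trans hukt.le, fun ht' => le_rfl⟩,
          (hspec _).mpr ⟨hl.trans hukt.le, (hms.le.trans hmr), (hune _).symm⟩⟩
    · -- k s < u : target to the left
      have ht0 : 0 < (t : ℕ) := by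
        by_contra h
        have hp0 : 0 < p := s.pos
        have h2 := hu2 (by omega)
        have hks : k ⟨(t:ℕ), by omega⟩ ≤ k s := hk.monotone (by
          simp only [Fin.le_def]; omega)
        exact absurd (h2.trans hks) (not_le.mpr hcase)
      set kt := k ⟨(t : ℕ) - 1, by have := t.isLt; omega⟩ with hkt
      by_cases hms : kt ≤ k s
      · refine ⟨k s, ⟨⟨s, rfl⟩, fun h0 => hms, fun ht' => (hcase.le.trans (hu2 ht'))⟩,
          (hspec _).mpr ⟨hlm, hmr, hmu⟩⟩
      · push_neg at hms
        have hktu : kt < u := lt_of_le_of_ne (hu1 ht0) (fun h => hune _ h.symm)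
        refine ⟨kt, ⟨⟨_, rfl⟩, fun h0 => le_rfl, fun ht' => hktu.le.trans (hu2 ht')⟩,
          (hspec _).mpr ⟨hlm.trans hms.le, hktu.le.trans hr, (hune _).symm⟩⟩
  · intro h
    refine ⟨Set.subset_univ _, ?_, ?_⟩
    · rintro _ ⟨i, rfl⟩ _ ⟨j, rfl⟩ hAij
      obtain ⟨l, r, hl, hr, hspec⟩ := hA (k i)
      rw [hspec] at hAij
      obtain ⟨hlj, hjr, hji⟩ := hAij
      have hij : i ≠ j := fun e => hji (by rw [e])
      rcases lt_or_gt_of_ne hij with hlt | hgt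
      · -- i < j : use j' = i+1, interval t = i+1
        have hi1 : (i : ℕ) + 1 < p := by
          have := j.isLt; have : (i:ℕ) < (j:ℕ) := hlt; omega
        set j' : Fin p := ⟨(i : ℕ) + 1, hi1⟩ with hj'
        have hij' : k i < k j' := hk (Fin.lt_def.mpr (show (i:ℕ) < (i:ℕ)+1 by omega))
        have hj'j : k j' ≤ k j := hk.monotone (by
          show (i:ℕ)+1 ≤ (j:ℕ); have : (i:ℕ) < (j:ℕ) := hlt; omega)
        have hAij' : A (k i) (k j') :=
          (hspec _).mpr ⟨hl.trans hij'.le, hj'j.trans hjr, hij'.ne'⟩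
        set t : Fin (p + 1) := ⟨(i : ℕ) + 1, by omega⟩ with htdef
        have hkiI : k i ∈ Iv k t := by
          constructor
          · intro _; exact le_of_eq (by congr 1)
          · intro ht'; exact (hk.monotone (show (i:ℕ) ≤ (i:ℕ)+1 by omega)).trans le_rfl
        have hkjI : k j' ∈ Iv k t := by
          constructor
          · intro _; exact hij'.le.trans (le_of_eq rfl) |>.trans (le_of_eq rfl) |> fun _ =>
              (le_of_eq (by congr 1)).trans hij'.le
          · intro ht'; exact le_of_eq (by congr 1)
        exact (h t).2.1 (k i) ⟨⟨i, rfl⟩, hkiI⟩ (k j') ⟨⟨j', rfl⟩, hkjI⟩ hAij'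
      · -- j < i : use j' = i-1, interval t = i
        have hi0 : 0 < (i : ℕ) := by
          have : (j:ℕ) < (i:ℕ) := hgt; omega
        set j' : Fin p := ⟨(i : ℕ) - 1, by have := i.isLt; omega⟩ with hj'
        have hjj' : k j ≤ k j' := hk.monotone (by
          show (j:ℕ) ≤ (i:ℕ)-1; have : (j:ℕ) < (i:ℕ) := hgt; omega)
        have hj'i : k j' < k i := hk (Fin.lt_def.mpr (show (i:ℕ)-1 < (i:ℕ) by omega))
        have hAij' : A (k i) (k j') :=
          (hspec _).mpr ⟨hlj.trans hjj', hj'i.le.trans hr, hj'i.ne⟩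
        set t : Fin (p + 1) := ⟨(i : ℕ), by have := i.isLt; omega⟩ with htdef
        have hkiI : k i ∈ Iv k t := by
          constructor
          · intro _; exact (le_of_eq (by congr 1)).trans hj'i.le
          · intro ht'; exact le_of_eq (by congr 1)
        have hkjI : k j' ∈ Iv k t := by
          constructor
          · intro _; exact le_of_eq (by congr 1)
          · intro ht'; exact hj'i.le.trans (le_of_eq (by congr 1))
        exact (h t).2.1 (k i) ⟨⟨i, rfl⟩, hkiI⟩ (k j') ⟨⟨j', rfl⟩, hkjI⟩ hAij'
    · intro u _ hu
      -- find the interval containing u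
      obtain ⟨t, hut⟩ : ∃ t : Fin (p + 1), u ∈ Iv k t := by
        by_cases hS : ∃ s : ℕ, ∃ hs : s < p, u ≤ k ⟨s, hs⟩
        · set t0 := Nat.find hS with ht0
          obtain ⟨ht0p, hut0⟩ := Nat.find_spec hS
          refine ⟨⟨t0, by omega⟩, ?_, ?_⟩
          · intro hpos
            simp only [Fin.val_mk] at hpos ⊢
            have hmin := Nat.find_min hS (m := t0 - 1) (by omega)
            push_neg at hmin
            exact (hmin (by omega)).le
          · intro ht'
            simp only [Fin.val_mk] at ht' ⊢
            exact hut0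
        · push_neg at hS
          refine ⟨⟨p, lt_add_one p⟩, ?_, ?_⟩
          · intro hpos
            simp only [Fin.val_mk] at hpos ⊢
            exact (hS (p - 1) (by omega)).le
          · intro ht'
            simp only [Fin.val_mk] at ht'
            omega
      have hu' : u ∉ Set.range k ∩ Iv k t := fun h' => hu h'.1
      obtain ⟨m, hm, hAum⟩ := (h t).2.2 u hut hu'
      exact ⟨m, hm.1, hAum⟩
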